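/- Let M ∈ F^{m×n} and C ∈ F^{r×(n-r)} satisfy the Kipnis–Shamir equation M·(I_{n-r}; C) = 0. Then for every row r_ℓ of M and every subset T ⊆ {1,...,n} of size r+1, the (r+1)×(r+1) determinant of the matrix obtained by stacking r_ℓ on top of the r×n matrix (−C | I_r), restricted to columns in T, is zero. -/

import Mathlib

open Matrix

/-- Kipnis–Shamir implies Support Minors: if `M·(I_s ; C) = 0`, then for every row `ℓ`
of `M` and every choice `t` of `r+1` distinct columns, the `(r+1)×(r+1)` minor of the
matrix obtained by stacking the row `M_ℓ` on top of `(−C | I_r)`, restricted to the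
columns `t`, vanishes. -/
theorem statement5 {F : Type*} [Field F] (m s r : ℕ)
    (M : Matrix (Fin m) (Fin s ⊕ Fin r) F) (C : Matrix (Fin r) (Fin s) F)
    (h : M * Matrix.fromRows (1 : Matrix (Fin s) (Fin s) F) C = 0) :
    ∀ (ℓ : Fin m) (t : Fin (r + 1) → Fin s ⊕ Fin r), Function.Injective t →
      (Matrix.of (fun (u j : Fin (r + 1)) =>
          (Fin.cases (M ℓ (t j))
            (fun u' => Matrix.fromCols (-C) (1 : Matrix (Fin r) (Fin r) F) u' (t j))
            u : F)) : Matrix (Fin (r + 1)) (Fin (r + 1)) F).det = 0 := by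
  intro ℓ t _
  set A : Matrix (Fin (r + 1)) (Fin (r + 1)) F :=
    Matrix.of (fun (u j : Fin (r + 1)) =>
      (Fin.cases (M ℓ (t j))
        (fun u' => Matrix.fromCols (-C) (1 : Matrix (Fin r) (Fin r) F) u' (t j))
        u : F)) with hA
  -- key relation from the Kipnis–Shamir equation
  have key : ∀ i : Fin s, M ℓ (Sum.inl i) = ∑ u : Fin r, M ℓ (Sum.inr u) * (-C u i) := by
    intro i
    have h0 : (M * Matrix.fromRows (1 : Matrix (Fin s) (Fin s) F) C) ℓ i = 0 := by
      rw [h]; rfl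
    rw [Matrix.mul_apply, Fintype.sum_sum_type] at h0
    simp only [Matrix.fromRows_apply_inl, Matrix.fromRows_apply_inr, Matrix.one_apply,
      mul_ite, mul_one, mul_zero, Finset.sum_ite_eq, Finset.sum_ite_eq', Finset.mem_univ, if_true] at h0
    have := eq_neg_of_add_eq_zero_left h0
    rw [this]
    simp [Finset.mul_sum, Finset.sum_neg_distrib, mul_comm]
  -- coefficient vector
  set c : Fin (r + 1) → F := Fin.cases 0 (fun u => M ℓ (Sum.inr u)) with hc
  have hrow : A = A.updateRow 0 (∑ k, c k • A k) := by
    ext u j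
    rcases eq_or_ne u 0 with rfl | hu
    · rw [Matrix.updateRow_self]
      rw [Fin.sum_univ_succ]
      simp only [hc, hA, Fin.cases_zero, Fin.cases_succ, zero_smul, zero_add,
        Finset.sum_apply, Pi.smul_apply, smul_eq_mul, Matrix.of_apply]
      cases ht : t j with
      | inl i =>
        simp only [Matrix.fromCols_apply_inl]
        rw [key i]
        simp [Matrix.neg_apply]
      | inr v =>
        simp only [Matrix.fromCols_apply_inr, Matrix.one_apply, mul_ite, mul_one, mul_zero]
        simp
    · rw [Matrix.updateRow_ne hu]
  have := Matrix.det_updateRow_sum A 0 c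
  rw [← hrow] at this
  have hc0 : c 0 = 0 := rfl
  rw [hc0, zero_smul] at this
  exact this
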